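/- Let p1, p2 ∈ (0,1] and let D1 and D2 be the random decision sets of two independent stationary block bootstrap paths of length N with parameters p1 and p2 respectively. Then for every integer 1 ≤ k ≤ N, the probability that |D1 ∪ D2| = k equals C(N−1, k−1) · (1 − (1−p1)(1−p2))^{k−1} · ((1−p1)(1−p2))^{N−k}, where C(n, r) is the binomial coefficient. Equivalently, for 0 < p1, p2 < 1, writing λ_i = −log(1−p_i), this probability equals C(N−1, k−1) e^{−(λ1+λ2)(N−1)} (e^{λ1+λ2} − 1)^{k−1}. -/

import Mathlib

open MeasureTheory

/-- Given the i.i.d. Bernoulli draws `d : Fin (N-1) → Bool` of a stationary block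
bootstrap path of length `N`, the decision indicator of position `i : Fin N`:
position `0` is always a decision index, and position `i ≥ 1` is a decision index
iff `d_i = 1` (i.e. `d ⟨i-1, _⟩ = true`). -/
def decisionIndicator {N : ℕ} (d : Fin (N - 1) → Bool) (i : Fin N) : Bool :=
  if h : i.val = 0 then true else d ⟨i.val - 1, by have := i.isLt; omega⟩

/-- The random decision set `D = {0} ∪ {i ≥ 1 : d_i = 1}` of a stationary block
bootstrap path of length `N`. -/
def decisionSet {N : ℕ} (d : Fin (N - 1) → Bool) : Finset (Fin N) :=
  Finset.univ.filter (fun i => decisionIndicator d i = true)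

open Finset
open scoped ENNReal

lemma card_bool_funs (n m : ℕ) :
    ((Finset.univ.filter (fun h : Fin n → Bool => (Finset.univ.filter (fun j => h j = true)).card = m)).card)
      = n.choose m := by
  have h0 := Finset.card_powersetCard m (Finset.univ : Finset (Fin n))
  simp only [Finset.card_univ, Fintype.card_fin] at h0
  rw [← h0]
  exact Finset.card_bij' (fun h _ => Finset.univ.filter (fun j => h j = true))
      (fun s _ => fun j => decide (j ∈ s))
      (by intro h hh; simp only [Finset.mem_filter, Finset.mem_univ, true_and] at hh
          simp [Finset.mem_powersetCard, hh])
      (by intro s hs; simp only [Finset.mem_powersetCard] at hs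
          simp only [Finset.mem_filter, Finset.mem_univ, true_and]
          rw [show (Finset.univ.filter fun j => decide (j ∈ s) = true) = s by ext j; simp]
          exact hs.2)
      (by intro h hh; funext j; simp)
      (by intro s hs; ext j; simp)

lemma fiber_sum {n : ℕ} (w1 w2 : Bool → ℝ≥0∞) (h : Fin n → Bool) :
    ∑ x ∈ Finset.univ.filter
        (fun x : (Fin n → Bool) × (Fin n → Bool) => (fun j => x.1 j || x.2 j) = h),
        ((∏ i, w1 (x.1 i)) * (∏ i, w2 (x.2 i)))
      = ∏ j, (bif h j then w1 true * w2 true + w1 true * w2 false + w1 false * w2 true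
              else w1 false * w2 false) := by
  rw [Finset.sum_filter]
  rw [← Equiv.sum_comp (Equiv.arrowProdEquivProdArrow (Fin n) (fun _ => Bool) (fun _ => Bool))]
  have key : ∀ y : Fin n → Bool × Bool,
      (if (fun j => ((Equiv.arrowProdEquivProdArrow (Fin n) (fun _ => Bool) (fun _ => Bool)) y).1 j
            || ((Equiv.arrowProdEquivProdArrow (Fin n) (fun _ => Bool) (fun _ => Bool)) y).2 j) = h then
        (∏ i, w1 (((Equiv.arrowProdEquivProdArrow (Fin n) (fun _ => Bool) (fun _ => Bool)) y).1 i)) *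
        (∏ i, w2 (((Equiv.arrowProdEquivProdArrow (Fin n) (fun _ => Bool) (fun _ => Bool)) y).2 i)) else 0)
      = if (fun j => (y j).1 || (y j).2) = h then ∏ i, (w1 (y i).1 * w2 (y i).2) else 0 := by
    intro y
    simp [Equiv.arrowProdEquivProdArrow, Finset.prod_mul_distrib]
    exact if_congr Iff.rfl rfl rfl
  simp only [key]
  rw [← Finset.sum_filter]
  have hfil : (Finset.univ.filter (fun y : Fin n → Bool × Bool => (fun j => (y j).1 || (y j).2) = h))
      = Fintype.piFinset (fun j => Finset.univ.filter (fun ab : Bool × Bool => (ab.1 || ab.2) = h j)) := by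
    ext y
    simp [Fintype.mem_piFinset, funext_iff]
  rw [hfil,
    (Finset.prod_univ_sum (fun j => Finset.univ.filter (fun ab : Bool × Bool => (ab.1 || ab.2) = h j))
      (fun _ ab => w1 ab.1 * w2 ab.2)).symm]
  refine Finset.prod_congr rfl fun j _ => ?_
  cases hj : h j <;>
    simp [Finset.sum_filter, Fintype.sum_prod_type, hj] <;> ring

lemma key_sum {n : ℕ} (w1 w2 : Bool → ℝ≥0∞) (m : ℕ)
    (hm : m ≤ n) :
    ∑ x ∈ Finset.univ.filter
        (fun x : (Fin n → Bool) × (Fin n → Bool) =>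
          (Finset.univ.filter (fun j => (x.1 j || x.2 j) = true)).card = m),
        ((∏ i, w1 (x.1 i)) * (∏ i, w2 (x.2 i)))
      = (n.choose m : ℝ≥0∞)
          * (w1 true * w2 true + w1 true * w2 false + w1 false * w2 true) ^ m
          * (w1 false * w2 false) ^ (n - m) := by
  set r := w1 true * w2 true + w1 true * w2 false + w1 false * w2 true with hr
  set s0 := w1 false * w2 false with hs0
  have hpred : (Finset.univ.filter
      (fun x : (Fin n → Bool) × (Fin n → Bool) =>
          (Finset.univ.filter (fun j => (x.1 j || x.2 j) = true)).card = m))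
    = Finset.univ.filter
      (fun x : (Fin n → Bool) × (Fin n → Bool) =>
        (fun j => x.1 j || x.2 j) ∈ Finset.univ.filter
          (fun h : Fin n → Bool => (Finset.univ.filter (fun j => h j = true)).card = m)) := by
    ext x; simp
  rw [hpred, ← Finset.sum_fiberwise_eq_sum_filter]
  have : ∀ h ∈ Finset.univ.filter
      (fun h : Fin n → Bool => (Finset.univ.filter (fun j => h j = true)).card = m),
      (∑ x ∈ Finset.univ.filter
        (fun x : (Fin n → Bool) × (Fin n → Bool) => (fun j => x.1 j || x.2 j) = h),
        ((∏ i, w1 (x.1 i)) * (∏ i, w2 (x.2 i)))) = r ^ m * s0 ^ (n - m) := by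
    intro h hh
    simp only [Finset.mem_filter, Finset.mem_univ, true_and] at hh
    rw [fiber_sum]
    have : ∀ j : Fin n, (bif h j then r else s0) = if h j = true then r else s0 := by
      intro j; cases h j <;> simp
    rw [Finset.prod_congr rfl (fun j _ => this j)]
    rw [Finset.prod_ite, Finset.prod_const, Finset.prod_const, hh]
    have htot := Finset.card_filter_add_card_filter_not
      (s := (Finset.univ : Finset (Fin n))) (p := fun j => h j = true)
    rw [Finset.card_univ, Fintype.card_fin, hh] at htot
    have hc : (Finset.univ.filter (fun j : Fin n => ¬ h j = true)).card = n - m := by omega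
    rw [hc]
  rw [Finset.sum_congr rfl this, Finset.sum_const, card_bool_funs, nsmul_eq_mul, mul_assoc]

lemma card_union_decision {N : ℕ} [NeZero N] (f g : Fin (N - 1) → Bool) :
    (decisionSet f ∪ decisionSet g).card
      = 1 + (Finset.univ.filter (fun j : Fin (N - 1) => (f j || g j) = true)).card := by
  have hN : 0 < N := Nat.pos_of_ne_zero (NeZero.ne N)
  have hunion : decisionSet f ∪ decisionSet g
      = Finset.univ.filter (fun i => (decisionIndicator f i || decisionIndicator g i) = true) := by
    ext i; simp [decisionSet, Bool.or_eq_true]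
  set e : Fin (N - 1) → Fin N := fun j => ⟨j.val + 1, by have := j.isLt; omega⟩ with he
  have hins : Finset.univ.filter (fun i => (decisionIndicator f i || decisionIndicator g i) = true)
      = insert (⟨0, hN⟩ : Fin N)
          ((Finset.univ.filter (fun j : Fin (N - 1) => (f j || g j) = true)).image e) := by
    ext i
    simp only [Finset.mem_filter, Finset.mem_univ, true_and, Finset.mem_insert, Finset.mem_image]
    by_cases h0 : i.val = 0
    · have : i = ⟨0, hN⟩ := Fin.ext h0
      simp [this, decisionIndicator]
    · have hlt : i.val - 1 < N - 1 := by have := i.isLt; omega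
      constructor
      · intro hi
        refine Or.inr ⟨⟨i.val - 1, hlt⟩, ?_, ?_⟩
        · simpa [decisionIndicator, h0] using hi
        · simp only [he]; exact Fin.ext (by simp; omega)
      · rintro (rfl | ⟨j, hj, rfl⟩)
        · simp at h0
        · have : (e j).val = j.val + 1 := rfl
          simpa [decisionIndicator, he, Bool.or_eq_true] using hj
  have hinj : Function.Injective e := by
    intro a b hab
    have : a.val + 1 = b.val + 1 := congrArg Fin.val hab
    exact Fin.ext (by omega)
  have hnm : (⟨0, hN⟩ : Fin N) ∉ (Finset.univ.filter (fun j : Fin (N - 1) => (f j || g j) = true)).image e := by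
    simp only [Finset.mem_image]
    rintro ⟨j, _, hj⟩
    have : (e j).val = 0 := congrArg Fin.val hj
    simp [he] at this
  rw [hunion, hins, Finset.card_insert_of_notMem hnm, Finset.card_image_of_injective _ hinj]
  omega

lemma meas_coe_finset {α : Type*} [MeasurableSpace α] [MeasurableSingletonClass α]
    (μ : Measure α) (t : Finset α) : μ ↑t = ∑ x ∈ t, μ {x} := by
  have : (↑t : Set α) = ⋃ x ∈ t, {x} := by ext x; simp
  rw [this, measure_biUnion_finset]
  · intro x _ y _ hxy
    simp [Function.onFun, Set.disjoint_singleton, hxy]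
  · exact fun b _ => measurableSet_singleton b

lemma pi_bern_singleton {n : ℕ} (P : NNReal) (hP : P ≤ 1) (f : Fin n → Bool) :
    (Measure.pi (fun _ : Fin n => (PMF.bernoulli P hP).toMeasure)) {f}
      = ∏ i, (bif f i then (P : ℝ≥0∞) else 1 - (P : ℝ≥0∞)) := by
  rw [← Set.univ_pi_singleton f, Measure.pi_pi]
  refine Finset.prod_congr rfl fun i _ => ?_
  rw [PMF.toMeasure_apply_singleton _ _ (measurableSet_singleton _), PMF.bernoulli_apply]
  cases f i <;> simp [ENNReal.coe_sub]

/-- For two independent stationary block bootstrap paths of length `N` with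
parameters `p1, p2 ∈ (0,1]` and random decision sets `D1`, `D2`, the probability
that `|D1 ∪ D2| = k` (for `1 ≤ k ≤ N`) equals
`C(N-1, k-1) (1 - (1-p1)(1-p2))^(k-1) ((1-p1)(1-p2))^(N-k)`; equivalently, for
`p1, p2 < 1`, with `λᵢ = -log(1-pᵢ)`, it equals
`C(N-1, k-1) e^(-(λ1+λ2)(N-1)) (e^(λ1+λ2) - 1)^(k-1)`. -/
theorem stmt6 {N : ℕ} [NeZero N] (p1 p2 : ℝ)
    (hp10 : 0 < p1) (hp11 : p1 ≤ 1) (hp20 : 0 < p2) (hp21 : p2 ≤ 1)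
    (k : ℕ) (hk1 : 1 ≤ k) (hkN : k ≤ N) :
    ((Measure.pi (fun _ : Fin (N - 1) =>
        (PMF.bernoulli (Real.toNNReal p1) (Real.toNNReal_le_one.mpr hp11)).toMeasure)).prod
      (Measure.pi (fun _ : Fin (N - 1) =>
        (PMF.bernoulli (Real.toNNReal p2) (Real.toNNReal_le_one.mpr hp21)).toMeasure)))
      {d : (Fin (N - 1) → Bool) × (Fin (N - 1) → Bool) |
        (decisionSet d.1 ∪ decisionSet d.2).card = k}
      = ENNReal.ofReal (((N - 1).choose (k - 1) : ℝ)
          * (1 - (1 - p1) * (1 - p2)) ^ (k - 1) * ((1 - p1) * (1 - p2)) ^ (N - k))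
    ∧ (p1 < 1 → p2 < 1 →
        ((N - 1).choose (k - 1) : ℝ)
            * (1 - (1 - p1) * (1 - p2)) ^ (k - 1) * ((1 - p1) * (1 - p2)) ^ (N - k)
          = ((N - 1).choose (k - 1) : ℝ)
              * Real.exp (-((-Real.log (1 - p1)) + (-Real.log (1 - p2))) * ((N : ℝ) - 1))
              * (Real.exp ((-Real.log (1 - p1)) + (-Real.log (1 - p2))) - 1) ^ (k - 1)) := by
  have hN : 0 < N := Nat.pos_of_ne_zero (NeZero.ne N)
  constructor
  · set μ1 := Measure.pi (fun _ : Fin (N - 1) =>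
        (PMF.bernoulli (Real.toNNReal p1) (Real.toNNReal_le_one.mpr hp11)).toMeasure) with hμ1
    set μ2 := Measure.pi (fun _ : Fin (N - 1) =>
        (PMF.bernoulli (Real.toNNReal p2) (Real.toNNReal_le_one.mpr hp21)).toMeasure) with hμ2
    have hE : {d : (Fin (N - 1) → Bool) × (Fin (N - 1) → Bool) |
          (decisionSet d.1 ∪ decisionSet d.2).card = k}
        = ↑(Finset.univ.filter (fun d : (Fin (N - 1) → Bool) × (Fin (N - 1) → Bool) =>
            (decisionSet d.1 ∪ decisionSet d.2).card = k)) := by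
      ext d; simp
    rw [hE, meas_coe_finset]
    have hsingle : ∀ x : (Fin (N - 1) → Bool) × (Fin (N - 1) → Bool),
        (μ1.prod μ2) {x} = (∏ i, (bif x.1 i then ENNReal.ofReal p1 else 1 - ENNReal.ofReal p1))
          * (∏ i, (bif x.2 i then ENNReal.ofReal p2 else 1 - ENNReal.ofReal p2)) := by
      rintro ⟨f, g⟩
      rw [← Set.singleton_prod_singleton, Measure.prod_prod, hμ1, hμ2,
        pi_bern_singleton, pi_bern_singleton]
      rfl
    rw [Finset.sum_congr rfl (fun x _ => hsingle x)]
    have hfil : (Finset.univ.filter (fun d : (Fin (N - 1) → Bool) × (Fin (N - 1) → Bool) =>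
            (decisionSet d.1 ∪ decisionSet d.2).card = k))
        = Finset.univ.filter (fun x : (Fin (N - 1) → Bool) × (Fin (N - 1) → Bool) =>
            (Finset.univ.filter (fun j => (x.1 j || x.2 j) = true)).card = k - 1) := by
      refine Finset.filter_congr fun x _ => ?_
      rw [card_union_decision]
      omega
    rw [hfil]
    refine Eq.trans (key_sum (fun b => bif b then ENNReal.ofReal p1 else 1 - ENNReal.ofReal p1)
      (fun b => bif b then ENNReal.ofReal p2 else 1 - ENNReal.ofReal p2) (k - 1) (by omega)) ?_
    have h1m : (1 : ℝ≥0∞) - ENNReal.ofReal p1 = ENNReal.ofReal (1 - p1) := by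
      rw [ENNReal.ofReal_sub _ hp10.le, ENNReal.ofReal_one]
    have h2m : (1 : ℝ≥0∞) - ENNReal.ofReal p2 = ENNReal.ofReal (1 - p2) := by
      rw [ENNReal.ofReal_sub _ hp20.le, ENNReal.ofReal_one]
    simp only [cond_true, cond_false, h1m, h2m]
    have hq1 : (0:ℝ) ≤ 1 - p1 := by linarith
    have hq2 : (0:ℝ) ≤ 1 - p2 := by linarith
    have hr : ENNReal.ofReal p1 * ENNReal.ofReal p2 + ENNReal.ofReal p1 * ENNReal.ofReal (1 - p2)
        + ENNReal.ofReal (1 - p1) * ENNReal.ofReal p2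
        = ENNReal.ofReal (1 - (1 - p1) * (1 - p2)) := by
      rw [← ENNReal.ofReal_mul hp10.le, ← ENNReal.ofReal_mul hp10.le,
        ← ENNReal.ofReal_mul hq1, ← ENNReal.ofReal_add (by positivity) (by positivity),
        ← ENNReal.ofReal_add (by positivity) (by positivity)]
      congr 1; ring
    have hs : ENNReal.ofReal (1 - p1) * ENNReal.ofReal (1 - p2)
        = ENNReal.ofReal ((1 - p1) * (1 - p2)) := (ENNReal.ofReal_mul hq1).symm
    rw [hr, hs]
    have hA : (0:ℝ) ≤ 1 - (1 - p1) * (1 - p2) := by nlinarith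
    have hB : (0:ℝ) ≤ (1 - p1) * (1 - p2) := by positivity
    rw [← ENNReal.ofReal_pow hA, ← ENNReal.ofReal_pow hB,
      ← ENNReal.ofReal_natCast ((N-1).choose (k-1)),
      ← ENNReal.ofReal_mul (by positivity), ← ENNReal.ofReal_mul (by positivity)]
    congr 2
    rw [show N - 1 - (k - 1) = N - k by omega]
  · intro h1 h2
    have hq1 : (0:ℝ) < 1 - p1 := by linarith
    have hq2 : (0:ℝ) < 1 - p2 := by linarith
    set a : ℝ := (1 - p1) * (1 - p2) with ha
    have ha0 : 0 < a := by positivity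
    have hexpL : Real.exp ((-Real.log (1 - p1)) + (-Real.log (1 - p2))) = a⁻¹ := by
      rw [Real.exp_add, Real.exp_neg, Real.exp_neg, Real.exp_log hq1, Real.exp_log hq2,
        ha, mul_inv]
    have hcast : ((N:ℝ) - 1) = ((N - 1 : ℕ) : ℝ) := by
      rw [Nat.cast_sub hN, Nat.cast_one]
    have hexpN : Real.exp (-((-Real.log (1 - p1)) + (-Real.log (1 - p2))) * ((N : ℝ) - 1))
        = a ^ (N - 1) := by
      rw [hcast, mul_comm, Real.exp_nat_mul, Real.exp_neg, hexpL, inv_inv]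
    rw [hexpN, hexpL]
    have hsplit : a ^ (N - 1) = a ^ (k - 1) * a ^ (N - k) := by
      rw [← pow_add]; congr 1; omega
    rw [hsplit]
    have : a⁻¹ - 1 = (1 - a) / a := by field_simp
    rw [this, div_pow]
    field_simp
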